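/- arXiv:0909.4807 — 3 statements merged into one kernel-verified Lean document; each statement's English description precedes it below -/
import Mathlib

section
/- The sum of the n largest eigenvalues of a symmetric matrix A equals the maximum of tr(VᵀAV) over all N×n matrices V with orthonormal columns (Ky Fan variational characterization). -/
open Matrix

section Aux

variable {N n : ℕ}

lemma kyfan_sum_filter_lt (hnN : n ≤ N) (f : Fin N → ℝ) :
    ∑ j ∈ Finset.univ.filter (fun j : Fin N => (j : ℕ) < n), f j
      = ∑ i : Fin n, f (Fin.castLE hnN i) := by
  have h2 : ∑ i : Fin n, f (Fin.castLE hnN i)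
      = ∑ j ∈ Finset.univ.map (Fin.castLEEmb hnN), f j := by
    rw [Finset.sum_map]
    rfl
  rw [h2]
  congr 1
  ext j
  simp only [Finset.mem_filter, Finset.mem_univ, true_and, Finset.mem_map,
    Fin.castLEEmb_apply]
  constructor
  · intro hj; exact ⟨⟨j, hj⟩, rfl⟩
  · rintro ⟨i, rfl⟩; simp

lemma kyfan_card_filter_lt (hnN : n ≤ N) :
    (((Finset.univ.filter (fun j : Fin N => (j : ℕ) < n)).card : ℝ)) = n := by
  have h := kyfan_sum_filter_lt hnN (fun _ => (1 : ℝ))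
  simpa using h

lemma kyfan_core (hn1 : 1 ≤ n) (hnN : n ≤ N) (g s : Fin N → ℝ)
    (hg : Antitone g) (h0 : ∀ i, 0 ≤ s i) (h1 : ∀ i, s i ≤ 1)
    (hsum : ∑ i, s i = n) :
    ∑ i, g i * s i ≤ ∑ j ∈ Finset.univ.filter (fun j : Fin N => (j : ℕ) < n), g j := by
  have hmN : n - 1 < N := by omega
  set m : Fin N := ⟨n - 1, hmN⟩ with hm
  set θ : ℝ := g m with hθ
  have key : ∀ i : Fin N, g i * s i ≤ θ * s i + (if (i : ℕ) < n then g i - θ else 0) := by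
    intro i
    by_cases hi : (i : ℕ) < n
    · have him : i ≤ m := by
        simp only [hm, Fin.le_def]; omega
      have hgi : θ ≤ g i := hg him
      simp only [hi, if_true]
      nlinarith [h0 i, h1 i]
    · have him : m ≤ i := by
        simp only [hm, Fin.le_def]; omega
      have hgi : g i ≤ θ := hg him
      simp only [hi, if_false]
      nlinarith [h0 i]
  calc ∑ i, g i * s i ≤ ∑ i, (θ * s i + (if (i : ℕ) < n then g i - θ else 0)) :=
        Finset.sum_le_sum fun i _ => key i
    _ = θ * (∑ i, s i) + ∑ j ∈ Finset.univ.filter (fun j : Fin N => (j : ℕ) < n), (g j - θ) := by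
        rw [Finset.sum_add_distrib, ← Finset.mul_sum, Finset.sum_filter]
    _ = ∑ j ∈ Finset.univ.filter (fun j : Fin N => (j : ℕ) < n), g j := by
        rw [hsum, Finset.sum_sub_distrib, Finset.sum_const, nsmul_eq_mul]
        rw [kyfan_card_filter_lt hnN]
        ring

end Aux

noncomputable def sumNLargest {N : ℕ} (n : ℕ) (A : Matrix (Fin N) (Fin N) ℝ) : ℝ :=
  if h : A.IsHermitian then
    (((List.ofFn h.eigenvalues).insertionSort (· ≥ ·)).take n).sum
  else 0

/-- Ky Fan: the sum of the `n` largest eigenvalues of a symmetric matrix `A` is the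
maximum of `tr (Vᵀ A V)` over `N × n` matrices `V` with orthonormal columns. -/
theorem ky_fan_variational (N n : ℕ) (hn1 : 1 ≤ n) (hnN : n ≤ N)
    (A : Matrix (Fin N) (Fin N) ℝ) (hA : A.IsHermitian) :
    IsGreatest {x : ℝ | ∃ V : Matrix (Fin N) (Fin n) ℝ,
        Vᵀ * V = 1 ∧ x = (Vᵀ * A * V).trace} (sumNLargest n A) := by
  classical
  set lam : Fin N → ℝ := hA.eigenvalues with hlam
  set τ : Equiv.Perm (Fin N) := Tuple.sort lam with hτ
  set σ : Equiv.Perm (Fin N) := Fin.revPerm.trans τ with hσ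
  have hanti : Antitone (lam ∘ σ) := by
    intro i j hij
    have : (Fin.rev j) ≤ Fin.rev i := Fin.rev_le_rev.mpr hij
    exact Tuple.monotone_sort lam this
  have hsorted : ((List.ofFn lam).insertionSort (· ≥ ·)) = List.ofFn (lam ∘ σ) := by
    refine (fun hp hs => List.Perm.eq_of_pairwise' (List.pairwise_insertionSort _ _) hs hp) ?_ ?_
    · exact (List.perm_insertionSort _ _).trans (σ.ofFn_comp_perm lam).symm
    · rw [List.pairwise_ofFn]
      intro i j hij
      exact hanti hij.le
  have hsum_eq : sumNLargest n A
      = ∑ j ∈ Finset.univ.filter (fun j : Fin N => (j : ℕ) < n), lam (σ j) := by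
    rw [sumNLargest, dif_pos hA, hsorted, List.sum_take_ofFn]
    rfl
  set U : Matrix (Fin N) (Fin N) ℝ := (hA.eigenvectorUnitary : Matrix (Fin N) (Fin N) ℝ)
    with hU
  have hstarU : star U = Uᵀ := by
    rw [Matrix.star_eq_conjTranspose, Matrix.conjTranspose_eq_transpose_of_trivial]
  have hUtU : Uᵀ * U = 1 := by
    rw [← hstarU]; exact Unitary.coe_star_mul_self hA.eigenvectorUnitary
  have hUUt : U * Uᵀ = 1 := by
    rw [← hstarU]; exact Unitary.coe_mul_star_self hA.eigenvectorUnitary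
  have hdiag : Uᵀ * A * U = Matrix.diagonal lam := by
    have := hA.conjStarAlgAut_star_eigenvectorUnitary
    rw [Unitary.conjStarAlgAut_apply, Unitary.coe_star, star_star] at this
    rw [hstarU] at this
    rw [this, RCLike.ofReal_real_eq_id]
    rfl
  have hspec : A = U * Matrix.diagonal lam * Uᵀ := by
    have := hA.spectral_theorem
    rw [Unitary.conjStarAlgAut_apply] at this
    rw [hstarU] at this
    rw [this, RCLike.ofReal_real_eq_id]
    rfl
  constructor
  · -- membership
    set e : Fin n → Fin N := fun j => σ (Fin.castLE hnN j) with he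
    have hei : Function.Injective e := fun a b hab => by
      have := σ.injective hab
      exact Fin.castLE_injective hnN this
    refine ⟨U.submatrix id e, ?_, ?_⟩
    · ext j k
      simp only [Matrix.transpose_submatrix, Matrix.mul_apply, Matrix.submatrix_apply, id]
      have h1 : ∑ i, Uᵀ (e j) i * U i (e k) = (Uᵀ * U) (e j) (e k) := by
        simp [Matrix.mul_apply]
      simp only [Matrix.transpose_apply] at h1 ⊢
      rw [h1, hUtU]
      by_cases hjk : j = k
      · subst hjk; simp [Matrix.one_apply]
      · rw [Matrix.one_apply_ne (fun h => hjk (hei h)), Matrix.one_apply_ne hjk]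
    · have hVAV : (U.submatrix id e)ᵀ * A * (U.submatrix id e)
          = (Uᵀ * A * U).submatrix e e := by
        rw [Matrix.transpose_submatrix]
        conv_lhs => rw [← Matrix.submatrix_id_id A]
        rw [← Matrix.submatrix_mul Uᵀ A e id id Function.bijective_id,
          ← Matrix.submatrix_mul (Uᵀ * A) U e id e Function.bijective_id]
      rw [hVAV, hdiag, hsum_eq, Matrix.trace, kyfan_sum_filter_lt hnN (fun j => lam (σ j))]
      refine Finset.sum_congr rfl fun j _ => ?_
      simp only [Matrix.diag_apply, Matrix.submatrix_apply, Matrix.diagonal_apply_eq]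
      rfl
  · -- upper bound
    rintro x ⟨V, hV, rfl⟩
    set W : Matrix (Fin N) (Fin n) ℝ := Uᵀ * V with hW
    have hWtW : Wᵀ * W = 1 := by
      rw [hW, Matrix.transpose_mul, Matrix.transpose_transpose]
      have : Vᵀ * U * (Uᵀ * V) = Vᵀ * (U * Uᵀ) * V := by
        simp only [Matrix.mul_assoc]
      rw [this, hUUt, Matrix.mul_one, hV]
    set t : Fin N → ℝ := fun i => ∑ j, (W i j) ^ 2 with ht
    have htr : (Vᵀ * A * V).trace = ∑ i, lam i * t i := by
      have hVAV : Vᵀ * A * V = Wᵀ * Matrix.diagonal lam * W := by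
        rw [hW, Matrix.transpose_mul, Matrix.transpose_transpose, hspec]
        simp only [Matrix.mul_assoc]
      have hassoc : W * (Wᵀ * Matrix.diagonal lam) = (W * Wᵀ) * Matrix.diagonal lam := by
        simp only [Matrix.mul_assoc]
      rw [hVAV, Matrix.trace_mul_comm (Wᵀ * Matrix.diagonal lam) W, hassoc, Matrix.trace]
      refine Finset.sum_congr rfl fun i _ => ?_
      simp only [Matrix.diag_apply, Matrix.mul_diagonal]
      have hWW : (W * Wᵀ) i i = t i := by
        simp [Matrix.mul_apply, ht, sq]
      rw [hWW, mul_comm]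
    have ht0 : ∀ i, 0 ≤ t i := fun i => Finset.sum_nonneg fun j _ => sq_nonneg _
    have htsum : ∑ i, t i = n := by
      have h1 : ∑ i, t i = (W * Wᵀ).trace := by
        rw [Matrix.trace]
        refine Finset.sum_congr rfl fun i _ => ?_
        simp only [Matrix.diag_apply, Matrix.mul_apply, Matrix.transpose_apply, ht]
        refine Finset.sum_congr rfl fun j _ => ?_
        ring
      rw [h1, Matrix.trace_mul_comm W Wᵀ, hWtW, Matrix.trace_one]
      simp
    have ht1 : ∀ i, t i ≤ 1 := by
      intro i
      set P : Matrix (Fin N) (Fin N) ℝ := W * Wᵀ with hP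
      have hPP : P * P = P := by
        have : W * Wᵀ * (W * Wᵀ) = W * (Wᵀ * W) * Wᵀ := by
          simp only [Matrix.mul_assoc]
        rw [hP, this, hWtW, Matrix.mul_one]
      have hPsymm : Pᵀ = P := by
        rw [hP, Matrix.transpose_mul, Matrix.transpose_transpose]
      have hsym : ∀ a b, P a b = P b a := fun a b => by
        conv_lhs => rw [← hPsymm, Matrix.transpose_apply]
      have hPii : P i i = t i := by
        simp only [hP, Matrix.mul_apply, Matrix.transpose_apply, ht]
        refine Finset.sum_congr rfl fun j _ => ?_
        ring
      have h2 : P i i = ∑ k, (P i k) ^ 2 := by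
        conv_lhs => rw [← hPP]
        simp only [Matrix.mul_apply]
        refine Finset.sum_congr rfl fun k _ => ?_
        rw [hsym k i]
        ring
      have h3 : (P i i) ^ 2 ≤ P i i := by
        conv_rhs => rw [h2]
        exact Finset.single_le_sum (fun k _ => sq_nonneg (P i k)) (Finset.mem_univ i)
      have h4 : 0 ≤ P i i := hPii ▸ ht0 i
      rw [← hPii]
      nlinarith [h3, h4]
    have hre : ∑ i, lam i * t i = ∑ i, (lam ∘ σ) i * (t ∘ σ) i :=
      (Equiv.sum_comp σ (fun i => lam i * t i)).symm
    have hssum : ∑ i, (t ∘ σ) i = n := (Equiv.sum_comp σ t).trans htsum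
    have hfinal := kyfan_core hn1 hnN (lam ∘ σ) (t ∘ σ) hanti
      (fun i => ht0 _) (fun i => ht1 _) hssum
    rw [htr, hre, hsum_eq]
    exact hfinal
end

section
/- With e(k+1) = (𝒲(k) − J)e(k), 𝒲(k) i.i.d. symmetric with 𝒲(k)𝟙 = 𝟙 a.s., e(0) ⟂ 𝟙 deterministic, one has E[‖e(k)‖²] ≤ λ_1(E[𝒲²] − J)^k ‖e(0)‖² for all k. -/
open Matrix MeasureTheory ProbabilityTheory

instance {m n : Type*} : MeasurableSpace (Matrix m n ℝ) :=
  inferInstanceAs (MeasurableSpace (m → n → ℝ))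

lemma rayleigh_bound {N : ℕ} {A : Matrix (Fin N) (Fin N) ℝ} (hA : A.IsHermitian)
    (x : Fin N → ℝ) : x ⬝ᵥ (A *ᵥ x) ≤ (⨆ i, hA.eigenvalues i) * (x ⬝ᵥ x) := by
  rcases Nat.eq_zero_or_pos N with h0 | hN
  · subst h0
    simp [dotProduct, Real.iSup_of_isEmpty]
  · set U : Matrix (Fin N) (Fin N) ℝ := (hA.eigenvectorUnitary : Matrix (Fin N) (Fin N) ℝ)
      with hU
    set y : Fin N → ℝ := star U *ᵥ x with hy
    have hUU : U * star U = 1 := (Matrix.mem_unitaryGroup_iff).mp hA.eigenvectorUnitary.2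
    have hsU : star U = Uᵀ := Matrix.conjTranspose_eq_transpose_of_trivial U
    have hdot : ∀ w : Fin N → ℝ, x ⬝ᵥ (U *ᵥ w) = y ⬝ᵥ w := by
      intro w
      rw [dotProduct_mulVec, hy, hsU, Matrix.mulVec_transpose]
    have hxAx : x ⬝ᵥ (A *ᵥ x) = ∑ i, hA.eigenvalues i * (y i)^2 := by
      conv_lhs => rw [hA.spectral_theorem, Unitary.conjStarAlgAut_apply, ← Matrix.mulVec_mulVec, ← Matrix.mulVec_mulVec]
      rw [hdot]
      simp [dotProduct, Matrix.mulVec_diagonal, Function.comp]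
      exact Finset.sum_congr rfl fun i _ => by ring
    have hxx : x ⬝ᵥ x = ∑ i, (y i)^2 := by
      have : x ⬝ᵥ ((U * star U) *ᵥ x) = x ⬝ᵥ x := by rw [hUU, Matrix.one_mulVec]
      rw [← this, ← Matrix.mulVec_mulVec, hdot]
      simp [dotProduct, sq]
      rfl
    rw [hxAx, hxx, Finset.mul_sum]
    apply Finset.sum_le_sum
    intro i _
    have : hA.eigenvalues i ≤ ⨆ j, hA.eigenvalues j :=
      le_ciSup (Set.Finite.bddAbove (Set.finite_range _)) i
    exact mul_le_mul_of_nonneg_right this (sq_nonneg _)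

lemma key_matrix {N : ℕ} (M J : Matrix (Fin N) (Fin N) ℝ)
    (hJ : J = Matrix.of fun _ _ => (1 : ℝ) / N)
    (hs : M.IsSymm) (hr : M *ᵥ (fun _ => (1 : ℝ)) = fun _ => 1) :
    (M - J)ᵀ * (M - J) = M * M - J := by
  have hrow : ∀ i, ∑ l, M i l = 1 := by
    intro i
    have := congrFun hr i
    simpa [Matrix.mulVec, dotProduct] using this
  have hcol : ∀ i, ∑ l, M l i = 1 := by
    intro i
    calc ∑ l, M l i = ∑ l, M i l := Finset.sum_congr rfl fun l _ => hs.apply i l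
      _ = 1 := hrow i
  ext i j
  have hN : (0:ℝ) < (N:ℝ) := by
    have : 0 < N := Fin.pos i
    exact_mod_cast this
  set c : ℝ := 1 / N with hc
  have hMM : ∀ l, M l i = M i l := fun l => hs.apply i l
  calc ((M - J)ᵀ * (M - J)) i j = ∑ l, (M l i - c) * (M l j - c) := by
        simp [Matrix.mul_apply, hJ, hc]
    _ = ∑ l, (M l i * M l j - c * M l j - c * M l i + c * c) := by
        exact Finset.sum_congr rfl fun l _ => by ring
    _ = (∑ l, M l i * M l j) - c * (∑ l, M l j) - c * (∑ l, M l i) + (N : ℝ) * (c * c) := by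
        rw [Finset.sum_add_distrib, Finset.sum_sub_distrib, Finset.sum_sub_distrib,
          ← Finset.mul_sum, ← Finset.mul_sum, Finset.sum_const, Finset.card_fin,
          nsmul_eq_mul]
    _ = (∑ l, M i l * M l j) - c := by
        rw [hcol i, hcol j]
        have : ∑ l, M l i * M l j = ∑ l, M i l * M l j :=
          Finset.sum_congr rfl fun l _ => by rw [hMM l]
        rw [this, hc]
        field_simp
        ring
    _ = (M * M - J) i j := by simp [Matrix.mul_apply, hJ, hc]

def iterF {N : ℕ} (J : Matrix (Fin N) (Fin N) ℝ) (e0 : Fin N → ℝ) :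
    (k : ℕ) → (Fin k → Matrix (Fin N) (Fin N) ℝ) → (Fin N → ℝ)
  | 0, _ => e0
  | (k+1), v => (v (Fin.last k) - J) *ᵥ iterF J e0 k (v ∘ Fin.castSucc)

lemma iterF_measurable {N : ℕ} (J : Matrix (Fin N) (Fin N) ℝ) (e0 : Fin N → ℝ) (k : ℕ) :
    Measurable (iterF J e0 k) := by
  induction k with
  | zero => exact measurable_const
  | succ k ih =>
    apply measurable_pi_lambda
    intro i
    have : (fun v : Fin (k+1) → Matrix (Fin N) (Fin N) ℝ => iterF J e0 (k+1) v i) =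
        fun v => ∑ j, (v (Fin.last k) i j - J i j) * iterF J e0 k (v ∘ Fin.castSucc) j := by
      funext v
      simp [iterF, Matrix.mulVec, dotProduct, Matrix.sub_apply]
    rw [this]
    apply Finset.measurable_sum
    intro j _
    apply Measurable.mul
    · exact ((((measurable_pi_apply (X := fun _ : Fin N => ℝ) j).comp
        (measurable_pi_apply (X := fun _ : Fin N => Fin N → ℝ) i)).comp
        (measurable_pi_apply (X := fun _ : Fin (k+1) => Fin N → Fin N → ℝ) (Fin.last k)) :
        Measurable fun v : Fin (k+1) → Fin N → Fin N → ℝ => v (Fin.last k) i j)).sub measurable_const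
    · exact (measurable_pi_apply j).comp (ih.comp
        (measurable_pi_lambda _ fun l => measurable_pi_apply _))

lemma e_eq_iterF {N : ℕ} {Ω : Type*} (Wseq : ℕ → Ω → Matrix (Fin N) (Fin N) ℝ)
    (J : Matrix (Fin N) (Fin N) ℝ) (e0 : Fin N → ℝ) (e : ℕ → Ω → Fin N → ℝ)
    (he0 : ∀ ω, e 0 ω = e0) (he : ∀ k ω, e (k + 1) ω = (Wseq k ω - J) *ᵥ e k ω)
    (k : ℕ) (ω : Ω) : e k ω = iterF J e0 k (fun l : Fin k => Wseq l ω) := by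
  induction k with
  | zero => exact he0 ω
  | succ k ih =>
    rw [he k ω, ih]
    simp [iterF, Fin.last, Function.comp]
    congr 1

lemma mul_entry_measurable {N : ℕ} (i j : Fin N) :
    Measurable fun M : Matrix (Fin N) (Fin N) ℝ => (M * M) i j := by
  simp only [Matrix.mul_apply]
  exact Finset.measurable_sum _ fun l _ =>
    (((measurable_pi_apply (X := fun _ : Fin N => ℝ) l).comp (measurable_pi_apply (X := fun _ : Fin N => Fin N → ℝ) i)).mul
      ((measurable_pi_apply (X := fun _ : Fin N => ℝ) j).comp (measurable_pi_apply (X := fun _ : Fin N => Fin N → ℝ) l)) :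
      Measurable fun M : Fin N → Fin N → ℝ => M i l * M l j)

lemma indep_step {N : ℕ} {Ω : Type*} [MeasurableSpace Ω] {μ : MeasureTheory.Measure Ω}
    (Wseq : ℕ → Ω → Matrix (Fin N) (Fin N) ℝ) (hWmeas : ∀ k, Measurable (Wseq k))
    (hindep : iIndepFun Wseq μ)
    (J : Matrix (Fin N) (Fin N) ℝ) (e0 : Fin N → ℝ) (e : ℕ → Ω → Fin N → ℝ)
    (he0 : ∀ ω, e 0 ω = e0) (he : ∀ k ω, e (k + 1) ω = (Wseq k ω - J) *ᵥ e k ω)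
    (k : ℕ) (i j : Fin N) :
    IndepFun (fun ω => (Wseq k ω * Wseq k ω) i j) (fun ω => e k ω i * e k ω j) μ := by
  have hdisj : Disjoint ({k} : Finset ℕ) (Finset.range k) := by
    simp [Finset.disjoint_singleton_left]
  have base := hindep.indepFun_finset {k} (Finset.range k) hdisj hWmeas
  have hkmem : k ∈ ({k} : Finset ℕ) := Finset.mem_singleton_self k
  set ψ : (({k} : Finset ℕ) → Matrix (Fin N) (Fin N) ℝ) → ℝ :=
    fun v => (v ⟨k, hkmem⟩ * v ⟨k, hkmem⟩) i j with hψ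
  set φ : (↥(Finset.range k) → Matrix (Fin N) (Fin N) ℝ) → ℝ :=
    fun v => iterF J e0 k (fun l : Fin k => v ⟨l.val, Finset.mem_range.mpr l.isLt⟩) i *
      iterF J e0 k (fun l : Fin k => v ⟨l.val, Finset.mem_range.mpr l.isLt⟩) j with hφ
  have hψm : Measurable ψ :=
    (mul_entry_measurable i j).comp (measurable_pi_apply _)
  have hreidx : Measurable fun (v : ↥(Finset.range k) → Matrix (Fin N) (Fin N) ℝ)
      (l : Fin k) => v ⟨l.val, Finset.mem_range.mpr l.isLt⟩ :=
    measurable_pi_lambda _ fun l => measurable_pi_apply _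
  have hφm : Measurable φ :=
    ((measurable_pi_apply i).comp ((iterF_measurable J e0 k).comp hreidx)).mul
      ((measurable_pi_apply j).comp ((iterF_measurable J e0 k).comp hreidx))
  have := base.comp hψm hφm
  convert this using 1
  · rfl
  funext ω
  rw [e_eq_iterF Wseq J e0 e he0 he k ω]
  rfl

lemma e_meas {N : ℕ} {Ω : Type*} [MeasurableSpace Ω]
    (Wseq : ℕ → Ω → Matrix (Fin N) (Fin N) ℝ) (hWmeas : ∀ k, Measurable (Wseq k))
    (J : Matrix (Fin N) (Fin N) ℝ) (e0 : Fin N → ℝ) (e : ℕ → Ω → Fin N → ℝ)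
    (he0 : ∀ ω, e 0 ω = e0) (he : ∀ k ω, e (k + 1) ω = (Wseq k ω - J) *ᵥ e k ω)
    (k : ℕ) (i : Fin N) : Measurable fun ω => e k ω i := by
  have hrep : (fun ω => e k ω i) = fun ω => iterF J e0 k (fun l : Fin k => Wseq l ω) i :=
    funext fun ω => by rw [e_eq_iterF Wseq J e0 e he0 he k ω]
  rw [hrep]
  exact (measurable_pi_apply i).comp ((iterF_measurable J e0 k).comp
    (measurable_pi_lambda _ fun l => hWmeas l))

lemma quad_expand {N : ℕ} (B : Matrix (Fin N) (Fin N) ℝ) (x : Fin N → ℝ) :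
    x ⬝ᵥ (B *ᵥ x) = ∑ i, ∑ j, B i j * (x i * x j) := by
  simp only [dotProduct, Matrix.mulVec, Finset.mul_sum]
  exact Finset.sum_congr rfl fun i _ => Finset.sum_congr rfl fun j _ => by ring

lemma norm_mulVec_sq {N : ℕ} (M : Matrix (Fin N) (Fin N) ℝ) (x : Fin N → ℝ) :
    ∑ i, ((M *ᵥ x) i)^2 = x ⬝ᵥ ((Mᵀ * M) *ᵥ x) := by
  rw [← Matrix.mulVec_mulVec, Matrix.dotProduct_mulVec (R := ℝ) x, Matrix.vecMul_transpose]
  simp [dotProduct, sq]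

lemma e_prod_integrable {N : ℕ} {Ω : Type*} [MeasurableSpace Ω]
    {μ : MeasureTheory.Measure Ω} {e : ℕ → Ω → Fin N → ℝ}
    (hinte : ∀ k, Integrable (fun ω => ∑ i, (e k ω i) ^ 2) μ)
    (hmeas : ∀ k i, Measurable fun ω => e k ω i) (k : ℕ) (i j : Fin N) :
    Integrable (fun ω => e k ω i * e k ω j) μ := by
  apply Integrable.mono' (hinte k) ((hmeas k i).mul (hmeas k j)).aestronglyMeasurable
  refine Filter.Eventually.of_forall fun ω => ?_
  have h1 : (e k ω i)^2 ≤ ∑ l, (e k ω l)^2 :=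
    Finset.single_le_sum (f := fun l => (e k ω l)^2) (fun l _ => sq_nonneg _) (Finset.mem_univ i)
  have h2 : (e k ω j)^2 ≤ ∑ l, (e k ω l)^2 :=
    Finset.single_le_sum (f := fun l => (e k ω l)^2) (fun l _ => sq_nonneg _) (Finset.mem_univ j)
  rw [Real.norm_eq_abs, Pi.mul_apply, abs_mul]
  nlinarith [sq_nonneg (|e k ω i| - |e k ω j|), sq_abs (e k ω i), sq_abs (e k ω j),
    abs_nonneg (e k ω i), abs_nonneg (e k ω j)]

lemma step_bound {N : ℕ} {Ω : Type*} [MeasurableSpace Ω]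
    (μ : MeasureTheory.Measure Ω) [IsProbabilityMeasure μ]
    (Wseq : ℕ → Ω → Matrix (Fin N) (Fin N) ℝ) (hWmeas : ∀ k, Measurable (Wseq k))
    (hindep : iIndepFun Wseq μ)
    (hident : ∀ k, IdentDistrib (Wseq k) (Wseq 0) μ μ)
    (hWsymm : ∀ k, ∀ᵐ ω ∂μ, (Wseq k ω).IsSymm)
    (hWrow : ∀ k, ∀ᵐ ω ∂μ, Wseq k ω *ᵥ (fun _ => (1 : ℝ)) = fun _ => 1)
    (hintW : ∀ i j, Integrable (fun ω => (Wseq 0 ω * Wseq 0 ω) i j) μ)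
    (J : Matrix (Fin N) (Fin N) ℝ) (hJ : J = Matrix.of fun _ _ => (1 : ℝ) / N)
    (e0 : Fin N → ℝ)
    (e : ℕ → Ω → Fin N → ℝ) (he0 : ∀ ω, e 0 ω = e0)
    (he : ∀ k ω, e (k + 1) ω = (Wseq k ω - J) *ᵥ e k ω)
    (hinte : ∀ k, Integrable (fun ω => ∑ i, (e k ω i) ^ 2) μ)
    (EW2 : Matrix (Fin N) (Fin N) ℝ)
    (hE : EW2 = Matrix.of fun i j => ∫ ω, (Wseq 0 ω * Wseq 0 ω) i j ∂μ)
    (hH : (EW2 - J).IsHermitian)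
    (lam1 : ℝ) (hlam1 : lam1 = ⨆ i, hH.eigenvalues i) (k : ℕ) :
    ∫ ω, ∑ i, (e (k+1) ω i) ^ 2 ∂μ ≤ lam1 * ∫ ω, ∑ i, (e k ω i) ^ 2 ∂μ := by
  have hmeas : ∀ k i, Measurable fun ω => e k ω i :=
    fun k i => e_meas Wseq hWmeas J e0 e he0 he k i
  have hprInt : ∀ i j, Integrable (fun ω => e k ω i * e k ω j) μ :=
    fun i j => e_prod_integrable hinte hmeas k i j
  have hW2id : ∀ i j, IdentDistrib (fun ω => (Wseq k ω * Wseq k ω) i j)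
      (fun ω => (Wseq 0 ω * Wseq 0 ω) i j) μ μ :=
    fun i j => (hident k).comp (mul_entry_measurable i j)
  have hW2int : ∀ i j, Integrable (fun ω => (Wseq k ω * Wseq k ω) i j) μ :=
    fun i j => (hW2id i j).integrable_iff.mpr (hintW i j)
  have hW2eq : ∀ i j, ∫ ω, (Wseq k ω * Wseq k ω) i j ∂μ = EW2 i j := by
    intro i j
    rw [hE]
    exact (hW2id i j).integral_eq
  have hIndep : ∀ i j, IndepFun (fun ω => (Wseq k ω * Wseq k ω) i j)
      (fun ω => e k ω i * e k ω j) μ :=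
    fun i j => indep_step Wseq hWmeas hindep J e0 e he0 he k i j
  have hmulInt : ∀ i j, Integrable
      (fun ω => (Wseq k ω * Wseq k ω) i j * (e k ω i * e k ω j)) μ :=
    fun i j => (hIndep i j).integrable_mul (hW2int i j) (hprInt i j)
  have termInt : ∀ i j : Fin N, Integrable
      (fun ω => ((Wseq k ω * Wseq k ω) i j - J i j) * (e k ω i * e k ω j)) μ := by
    intro i j
    have := (hmulInt i j).sub ((hprInt i j).const_mul (J i j))
    refine this.congr (Filter.Eventually.of_forall fun ω => ?_)
    simp only [Pi.sub_apply]
    ring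
  have hae : ∀ᵐ ω ∂μ, (∑ i, (e (k+1) ω i)^2) =
      ∑ i, ∑ j, ((Wseq k ω * Wseq k ω) i j - J i j) * (e k ω i * e k ω j) := by
    filter_upwards [hWsymm k, hWrow k] with ω hs hr
    rw [he k ω, norm_mulVec_sq, key_matrix _ J hJ hs hr, quad_expand]
    rfl
  have hintegral_eq : ∫ ω, ∑ i, (e (k+1) ω i)^2 ∂μ =
      ∑ i, ∑ j, (EW2 - J) i j * ∫ ω, e k ω i * e k ω j ∂μ := by
    rw [integral_congr_ae hae,
      integral_finset_sum _ (fun i _ => integrable_finset_sum _ (fun j _ => termInt i j))]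
    refine Finset.sum_congr rfl fun i _ => ?_
    rw [integral_finset_sum _ (fun j _ => termInt i j)]
    refine Finset.sum_congr rfl fun j _ => ?_
    have hsm : (fun ω => ((Wseq k ω * Wseq k ω) i j - J i j) * (e k ω i * e k ω j)) =
        fun ω => (Wseq k ω * Wseq k ω) i j * (e k ω i * e k ω j) -
          J i j * (e k ω i * e k ω j) := by
      funext ω; ring
    have hprod : (fun a : Ω => (Wseq k a * Wseq k a) i j * (e k a i * e k a j)) =
        (fun ω => (Wseq k ω * Wseq k ω) i j) * (fun ω => e k ω i * e k ω j) := rfl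
    rw [hsm, integral_sub (hmulInt i j) ((hprInt i j).const_mul (J i j)),
      integral_const_mul, hprod,
      (hIndep i j).integral_mul_eq_mul_integral (hW2int i j).aestronglyMeasurable
        (hprInt i j).aestronglyMeasurable,
      hW2eq i j, Matrix.sub_apply]
    ring
  have hintegral_eq2 : ∑ i, ∑ j, (EW2 - J) i j * ∫ ω, e k ω i * e k ω j ∂μ =
      ∫ ω, (e k ω) ⬝ᵥ ((EW2 - J) *ᵥ e k ω) ∂μ := by
    have : ∀ ω, (e k ω) ⬝ᵥ ((EW2 - J) *ᵥ e k ω) =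
        ∑ i, ∑ j, (EW2 - J) i j * (e k ω i * e k ω j) := fun ω => quad_expand _ _
    symm
    rw [integral_congr_ae (Filter.Eventually.of_forall this),
      integral_finset_sum _ (fun i _ => integrable_finset_sum _
        (fun j _ => ((hprInt i j).const_mul ((EW2 - J) i j))))]
    refine Finset.sum_congr rfl fun i _ => ?_
    rw [integral_finset_sum _ (fun j _ => ((hprInt i j).const_mul ((EW2 - J) i j)))]
    exact Finset.sum_congr rfl fun j _ => integral_const_mul _ _
  have hptwise : ∀ ω, (e k ω) ⬝ᵥ ((EW2 - J) *ᵥ e k ω) ≤ lam1 * ∑ i, (e k ω i)^2 := by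
    intro ω
    have := rayleigh_bound hH (e k ω)
    rw [← hlam1] at this
    have hd : (e k ω) ⬝ᵥ (e k ω) = ∑ i, (e k ω i)^2 := by simp [dotProduct, sq]
    rw [hd] at this
    exact this
  have hquadInt : Integrable (fun ω => (e k ω) ⬝ᵥ ((EW2 - J) *ᵥ e k ω)) μ := by
    have : (fun ω => (e k ω) ⬝ᵥ ((EW2 - J) *ᵥ e k ω)) =
        fun ω => ∑ i, ∑ j, (EW2 - J) i j * (e k ω i * e k ω j) := by
      funext ω; exact quad_expand _ _
    rw [this]
    exact integrable_finset_sum _ (fun i _ => integrable_finset_sum _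
      (fun j _ => ((hprInt i j).const_mul _)))
  calc ∫ ω, ∑ i, (e (k+1) ω i) ^ 2 ∂μ
      = ∫ ω, (e k ω) ⬝ᵥ ((EW2 - J) *ᵥ e k ω) ∂μ := by rw [hintegral_eq, hintegral_eq2]
    _ ≤ ∫ ω, lam1 * ∑ i, (e k ω i)^2 ∂μ :=
        integral_mono hquadInt ((hinte k).const_mul lam1) hptwise
    _ = lam1 * ∫ ω, ∑ i, (e k ω i)^2 ∂μ := integral_const_mul _ _

/-- With `e(k+1) = (𝒲(k) - J) e(k)`, `𝒲(k)` i.i.d. symmetric with `𝒲(k) 𝟙 = 𝟙` a.s.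
and `e(0) ⟂ 𝟙` deterministic, one has `E[‖e(k)‖²] ≤ λ_1(E[𝒲²] - J)^k ‖e(0)‖²`. -/
theorem mse_decay_bound (N : ℕ) {Ω : Type*} [MeasurableSpace Ω]
    (μ : MeasureTheory.Measure Ω) [IsProbabilityMeasure μ]
    (Wseq : ℕ → Ω → Matrix (Fin N) (Fin N) ℝ) (hWmeas : ∀ k, Measurable (Wseq k))
    (hindep : iIndepFun Wseq μ)
    (hident : ∀ k, IdentDistrib (Wseq k) (Wseq 0) μ μ)
    (hWsymm : ∀ k, ∀ᵐ ω ∂μ, (Wseq k ω).IsSymm)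
    (hWrow : ∀ k, ∀ᵐ ω ∂μ, Wseq k ω *ᵥ (fun _ => (1 : ℝ)) = fun _ => 1)
    (hintW : ∀ i j, Integrable (fun ω => (Wseq 0 ω * Wseq 0 ω) i j) μ)
    (J : Matrix (Fin N) (Fin N) ℝ) (hJ : J = Matrix.of fun _ _ => (1 : ℝ) / N)
    (e0 : Fin N → ℝ) (hperp : (fun _ => (1 : ℝ)) ⬝ᵥ e0 = 0)
    (e : ℕ → Ω → Fin N → ℝ) (he0 : ∀ ω, e 0 ω = e0)
    (he : ∀ k ω, e (k + 1) ω = (Wseq k ω - J) *ᵥ e k ω)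
    (hinte : ∀ k, Integrable (fun ω => ∑ i, (e k ω i) ^ 2) μ)
    (EW2 : Matrix (Fin N) (Fin N) ℝ)
    (hE : EW2 = Matrix.of fun i j => ∫ ω, (Wseq 0 ω * Wseq 0 ω) i j ∂μ)
    (hH : (EW2 - J).IsHermitian)
    (lam1 : ℝ) (hlam1 : lam1 = ⨆ i, hH.eigenvalues i) :
    ∀ k, ∫ ω, ∑ i, (e k ω i) ^ 2 ∂μ ≤ lam1 ^ k * ∑ i, (e0 i) ^ 2 := by
  intro k
  by_cases hz : ∑ i, (e0 i)^2 = 0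
  · have he0z : ∀ i, e0 i = 0 := by
      intro i
      have h := (Finset.sum_eq_zero_iff_of_nonneg
        (fun l _ => sq_nonneg (e0 l))).mp hz i (Finset.mem_univ i)
      exact pow_eq_zero_iff (two_ne_zero) |>.mp h
    have hek : ∀ m ω, e m ω = fun _ => 0 := by
      intro m
      induction m with
      | zero =>
        intro ω; rw [he0 ω]; funext i; exact he0z i
      | succ m ih =>
        intro ω
        rw [he m ω, ih ω]
        funext i
        simp [Matrix.mulVec, dotProduct]
    have hzero : ∀ ω, ∑ i, (e k ω i)^2 = 0 := by
      intro ω; rw [hek k ω]; simp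
    rw [integral_congr_ae (Filter.Eventually.of_forall hzero), hz]
    simp
  · have hsum0 : ∑ j, e0 j = 0 := by simpa [dotProduct] using hperp
    have hs0 : 0 < ∑ i, (e0 i)^2 :=
      lt_of_le_of_ne (Finset.sum_nonneg fun i _ => sq_nonneg _) (Ne.symm hz)
    have hJe0 : J *ᵥ e0 = 0 := by
      funext i
      simp [hJ, Matrix.mulVec, dotProduct, ← Finset.mul_sum, hsum0]
    have hquad0 : 0 ≤ e0 ⬝ᵥ ((EW2 - J) *ᵥ e0) := by
      rw [Matrix.sub_mulVec, dotProduct_sub, hJe0, dotProduct_zero, sub_zero]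
      have hq : e0 ⬝ᵥ (EW2 *ᵥ e0) = ∫ ω, e0 ⬝ᵥ ((Wseq 0 ω * Wseq 0 ω) *ᵥ e0) ∂μ := by
        rw [quad_expand]
        have hpt : ∀ ω, e0 ⬝ᵥ ((Wseq 0 ω * Wseq 0 ω) *ᵥ e0) =
            ∑ i, ∑ j, (Wseq 0 ω * Wseq 0 ω) i j * (e0 i * e0 j) :=
          fun ω => quad_expand _ _
        rw [integral_congr_ae (Filter.Eventually.of_forall hpt),
          integral_finset_sum _ (fun i _ => integrable_finset_sum _
            (fun j _ => (hintW i j).mul_const _))]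
        refine Finset.sum_congr rfl fun i _ => ?_
        rw [integral_finset_sum _ (fun j _ => (hintW i j).mul_const _)]
        refine Finset.sum_congr rfl fun j _ => ?_
        rw [integral_mul_const, hE]
        rfl
      rw [hq]
      apply integral_nonneg_of_ae
      filter_upwards [hWsymm 0] with ω hs
      calc (0:ℝ) ≤ ∑ i, ((Wseq 0 ω *ᵥ e0) i)^2 := Finset.sum_nonneg fun i _ => sq_nonneg _
        _ = e0 ⬝ᵥ (((Wseq 0 ω)ᵀ * Wseq 0 ω) *ᵥ e0) := norm_mulVec_sq _ _
        _ = e0 ⬝ᵥ ((Wseq 0 ω * Wseq 0 ω) *ᵥ e0) := by rw [hs.eq]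
    have hlamnn : 0 ≤ lam1 := by
      have hr := rayleigh_bound hH e0
      rw [← hlam1] at hr
      have hd : e0 ⬝ᵥ e0 = ∑ i, (e0 i)^2 := by simp [dotProduct, sq]
      rw [hd] at hr
      nlinarith
    induction k with
    | zero =>
      have hc : (fun ω => ∑ i, (e 0 ω i)^2) = fun _ : Ω => ∑ i, (e0 i)^2 :=
        funext fun ω => by rw [he0 ω]
      rw [hc, integral_const]
      simp
    | succ k ih =>
      calc ∫ ω, ∑ i, (e (k+1) ω i)^2 ∂μ
          ≤ lam1 * ∫ ω, ∑ i, (e k ω i)^2 ∂μ :=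
            step_bound μ Wseq hWmeas hindep hident hWsymm hWrow hintW J hJ e0 e he0 he
              hinte EW2 hE hH lam1 hlam1 k
        _ ≤ lam1 * (lam1 ^ k * ∑ i, (e0 i)^2) := mul_le_mul_of_nonneg_left ih hlamnn
        _ = lam1 ^ (k+1) * ∑ i, (e0 i)^2 := by ring
end

section
/- The function mapping the weight vector {W_ij : {i,j} ∈ E} to λ_1(E[𝒲²] − J) is convex, where the state matrix 𝒲 is defined by 𝒲_ij = W_ij·𝟏{link ij alive}, 𝒲_ii = 1 − Σ_j 𝒲_ij, and the link indicators have an arbitrary fixed joint distribution. -/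
open Matrix MeasureTheory

/-- The random consensus state matrix: for weights `Wt : ι → ℝ` on the edges of the
supergraph (edge `η` joins nodes `a η` and `b η`), and random link indicators
`L η ω ∈ {0,1}`, `𝒲_ij = Σ_{edges η = {i,j}} Wt η · L η ω` for `i ≠ j`, with
diagonal entries making all row sums equal to `1`. -/
noncomputable def stateMatrix {N : ℕ} {ι : Type*} [Fintype ι] {Ω : Type*}
    (a b : ι → Fin N) (L : ι → Ω → ℝ) (Wt : ι → ℝ) (ω : Ω) :
    Matrix (Fin N) (Fin N) ℝ :=
  Matrix.of fun i j =>
    if i = j then 1 - ∑ η, (if a η = i ∨ b η = i then Wt η * L η ω else 0)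
    else ∑ η, (if (a η = i ∧ b η = j) ∨ (a η = j ∧ b η = i) then Wt η * L η ω else 0)

section Rayleigh
variable {N : ℕ}

lemma dot_eq_inner (u v : EuclideanSpace ℝ (Fin N)) :
    (inner ℝ u v : ℝ) = ⇑u ⬝ᵥ ⇑v := by
  simp [PiLp.inner_apply, RCLike.inner_apply, dotProduct, mul_comm]

lemma rayleigh_le {A : Matrix (Fin N) (Fin N) ℝ} (hA : A.IsHermitian) (hN : 0 < N)
    (x : EuclideanSpace ℝ (Fin N)) (hx : ⇑x ⬝ᵥ ⇑x = 1) :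
    ⇑x ⬝ᵥ A *ᵥ ⇑x ≤ Finset.univ.sup' (Finset.univ_nonempty_iff.2 ⟨⟨0, hN⟩⟩) hA.eigenvalues := by
  have hT : Aᵀ = A := hA
  set s := Finset.univ.sup' (Finset.univ_nonempty_iff.2 ⟨⟨0, hN⟩⟩) hA.eigenvalues with hs
  have hAx : ∀ i, (inner ℝ (hA.eigenvectorBasis i) (WithLp.toLp 2 (A *ᵥ ⇑x : Fin N → ℝ) :
      EuclideanSpace ℝ (Fin N)) : ℝ) = hA.eigenvalues i * inner ℝ (hA.eigenvectorBasis i) x := by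
    intro i
    rw [dot_eq_inner, dot_eq_inner]
    show ⇑(hA.eigenvectorBasis i) ⬝ᵥ A *ᵥ ⇑x = _
    rw [Matrix.dotProduct_mulVec, ← Matrix.mulVec_transpose, hT, hA.mulVec_eigenvectorBasis]
    simp [dotProduct, Finset.mul_sum, mul_assoc]
  have expand : ⇑x ⬝ᵥ A *ᵥ ⇑x
      = ∑ i, hA.eigenvalues i * (inner ℝ (hA.eigenvectorBasis i) x : ℝ) ^ 2 := by
    have h1 : ⇑x ⬝ᵥ A *ᵥ ⇑x = (inner ℝ x (WithLp.toLp 2 (A *ᵥ ⇑x : Fin N → ℝ) :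
        EuclideanSpace ℝ (Fin N)) : ℝ) := by rw [dot_eq_inner]
    rw [h1, ← hA.eigenvectorBasis.sum_inner_mul_inner]
    refine Finset.sum_congr rfl fun i _ => ?_
    rw [hAx i, real_inner_comm x (hA.eigenvectorBasis i)]; ring
  have norm1 : ∑ i, (inner ℝ (hA.eigenvectorBasis i) x : ℝ) ^ 2 = 1 := by
    calc ∑ i, (inner ℝ (hA.eigenvectorBasis i) x : ℝ) ^ 2
        = ∑ i, (inner ℝ x (hA.eigenvectorBasis i) : ℝ) * inner ℝ (hA.eigenvectorBasis i) x := by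
          refine Finset.sum_congr rfl fun i _ => ?_
          rw [real_inner_comm x (hA.eigenvectorBasis i)]; ring
      _ = inner ℝ x x := hA.eigenvectorBasis.sum_inner_mul_inner x x
      _ = 1 := by rw [dot_eq_inner]; exact hx
  rw [expand]
  calc ∑ i, hA.eigenvalues i * (inner ℝ (hA.eigenvectorBasis i) x : ℝ) ^ 2
      ≤ ∑ i, s * (inner ℝ (hA.eigenvectorBasis i) x : ℝ) ^ 2 :=
        Finset.sum_le_sum fun i _ =>
          mul_le_mul_of_nonneg_right (Finset.le_sup' _ (Finset.mem_univ i)) (sq_nonneg _)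
    _ = s * ∑ i, (inner ℝ (hA.eigenvectorBasis i) x : ℝ) ^ 2 := by rw [Finset.mul_sum]
    _ = s := by rw [norm1, mul_one]

lemma rayleigh_attained {A : Matrix (Fin N) (Fin N) ℝ} (hA : A.IsHermitian) (hN : 0 < N) :
    ∃ x : Fin N → ℝ, x ⬝ᵥ x = 1 ∧
      x ⬝ᵥ A *ᵥ x = Finset.univ.sup' (Finset.univ_nonempty_iff.2 ⟨⟨0, hN⟩⟩) hA.eigenvalues := by
  obtain ⟨i, -, hi⟩ := Finset.exists_mem_eq_sup' (Finset.univ_nonempty_iff.2 ⟨⟨0, hN⟩⟩)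
    hA.eigenvalues
  have h2 : ⇑(hA.eigenvectorBasis i) ⬝ᵥ ⇑(hA.eigenvectorBasis i) = 1 := by
    rw [← dot_eq_inner, real_inner_self_eq_norm_sq, hA.eigenvectorBasis.orthonormal.1 i]
    norm_num
  refine ⟨⇑(hA.eigenvectorBasis i), h2, ?_⟩
  rw [hA.mulVec_eigenvectorBasis, dotProduct_smul, smul_eq_mul, h2, mul_one, hi]

lemma sumNLargest_one {N : ℕ} (hN : 0 < N) {A : Matrix (Fin N) (Fin N) ℝ}
    (hA : A.IsHermitian) :
    sumNLargest 1 A = Finset.univ.sup' (Finset.univ_nonempty_iff.2 ⟨⟨0, hN⟩⟩) hA.eigenvalues := by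
  rw [sumNLargest, dif_pos hA]
  generalize hl : (List.ofFn hA.eigenvalues).insertionSort (· ≥ ·) = l
  have hperm : l.Perm (List.ofFn hA.eigenvalues) :=
    hl ▸ (List.ofFn hA.eigenvalues).perm_insertionSort _
  have hsort : l.Pairwise (· ≥ ·) := hl ▸ List.pairwise_insertionSort _ _
  have hlen : l ≠ [] := by
    intro h
    subst h
    have h2 : (0:ℕ) = N := by simpa using hperm.length_eq
    omega
  obtain ⟨hd, tl, rfl⟩ := List.exists_cons_of_ne_nil hlen
  rw [show (hd :: tl).take 1 = [hd] from rfl]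
  rw [show ([hd] : List ℝ).sum = hd by simp]
  apply le_antisymm
  · have : hd ∈ List.ofFn hA.eigenvalues := hperm.mem_iff.1 List.mem_cons_self
    obtain ⟨i, hi⟩ := Set.mem_range.1 ((List.mem_ofFn' _ _).1 this)
    exact hi ▸ Finset.le_sup' _ (Finset.mem_univ i)
  · refine Finset.sup'_le _ _ fun i _ => ?_
    have : hA.eigenvalues i ∈ hd :: tl := hperm.mem_iff.2 (by simp [List.mem_ofFn])
    rcases List.mem_cons.1 this with h | h
    · exact h.le
    · exact List.rel_of_pairwise_cons hsort h

end Rayleigh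

section MeasBdd

variable {Ω : Type*} [MeasurableSpace Ω]

/-- Measurable and uniformly bounded real functions. -/
def MeasBdd (f : Ω → ℝ) : Prop := Measurable f ∧ ∃ C, ∀ ω, |f ω| ≤ C

lemma measBdd_const (c : ℝ) : MeasBdd (fun _ : Ω => c) :=
  ⟨measurable_const, |c|, fun _ => le_refl _⟩

lemma MeasBdd.mul {f g : Ω → ℝ} (hf : MeasBdd f) (hg : MeasBdd g) :
    MeasBdd (fun ω => f ω * g ω) := by
  obtain ⟨hfm, Cf, hCf⟩ := hf
  obtain ⟨hgm, Cg, hCg⟩ := hg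
  refine ⟨hfm.mul hgm, max Cf 0 * max Cg 0, fun ω => ?_⟩
  rw [abs_mul]
  exact mul_le_mul ((hCf ω).trans (le_max_left _ _)) ((hCg ω).trans (le_max_left _ _))
    (abs_nonneg _) (le_max_right _ _)

lemma MeasBdd.add {f g : Ω → ℝ} (hf : MeasBdd f) (hg : MeasBdd g) :
    MeasBdd (fun ω => f ω + g ω) := by
  obtain ⟨hfm, Cf, hCf⟩ := hf
  obtain ⟨hgm, Cg, hCg⟩ := hg
  exact ⟨hfm.add hgm, Cf + Cg, fun ω => (abs_add_le _ _).trans (add_le_add (hCf ω) (hCg ω))⟩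

lemma MeasBdd.const_sub {f : Ω → ℝ} (hf : MeasBdd f) (c : ℝ) :
    MeasBdd (fun ω => c - f ω) := by
  obtain ⟨hfm, Cf, hCf⟩ := hf
  exact ⟨measurable_const.sub hfm, |c| + Cf,
    fun ω => (abs_sub _ _).trans (add_le_add (le_refl _) (hCf ω))⟩

lemma measBdd_sum {α : Type*} (s : Finset α) (f : α → Ω → ℝ)
    (h : ∀ x ∈ s, MeasBdd (f x)) : MeasBdd (fun ω => ∑ x ∈ s, f x ω) := by
  classical
  induction s using Finset.induction_on with
  | empty => simpa using measBdd_const (0 : ℝ)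
  | insert a s' hx ih =>
    simp only [Finset.sum_insert hx]
    exact (h a (Finset.mem_insert_self _ _)).add
      (ih fun x hxs => h x (Finset.mem_insert_of_mem hxs))

lemma MeasBdd.integrable {f : Ω → ℝ} (hf : MeasBdd f) (μ : Measure Ω)
    [IsFiniteMeasure μ] : Integrable f μ := by
  obtain ⟨hfm, C, hC⟩ := hf
  exact ⟨hfm.aestronglyMeasurable,
    HasFiniteIntegral.of_bounded (C := C) (Filter.Eventually.of_forall fun ω => by
      simpa using hC ω)⟩

end MeasBdd

section StateMatrix

variable {N : ℕ} {ι : Type*} [Fintype ι] {Ω : Type*}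
  (a b : ι → Fin N) (L : ι → Ω → ℝ)

lemma stateMatrix_entry_symm (Wt : ι → ℝ) (ω : Ω) (i j : Fin N) :
    stateMatrix a b L Wt ω i j = stateMatrix a b L Wt ω j i := by
  by_cases h : i = j
  · subst h; rfl
  · simp only [stateMatrix, Matrix.of_apply, if_neg h, if_neg (Ne.symm h)]
    exact Finset.sum_congr rfl fun η _ => if_congr or_comm rfl rfl

lemma stateMatrix_transpose (Wt : ι → ℝ) (ω : Ω) :
    (stateMatrix a b L Wt ω)ᵀ = stateMatrix a b L Wt ω := by
  ext i j
  rw [Matrix.transpose_apply, stateMatrix_entry_symm]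

lemma stateMatrix_affine (W1 W2 : ι → ℝ) (ω : Ω) (t s : ℝ) (hts : t + s = 1) :
    stateMatrix a b L (t • W1 + s • W2) ω
      = t • stateMatrix a b L W1 ω + s • stateMatrix a b L W2 ω := by
  have hsum : ∀ (P : ι → Prop) [DecidablePred P],
      (∑ η, if P η then (t • W1 + s • W2) η * L η ω else 0)
        = t * (∑ η, if P η then W1 η * L η ω else 0)
          + s * (∑ η, if P η then W2 η * L η ω else 0) := by
    intro P _
    rw [Finset.mul_sum, Finset.mul_sum, ← Finset.sum_add_distrib]
    refine Finset.sum_congr rfl fun η _ => ?_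
    split_ifs with h
    · simp only [Pi.add_apply, Pi.smul_apply, smul_eq_mul]; ring
    · simp
  ext i j
  simp only [stateMatrix, Matrix.of_apply, Matrix.add_apply, Matrix.smul_apply, smul_eq_mul]
  by_cases h : i = j
  · simp only [if_pos h, hsum]
    linear_combination -hts
  · simp only [if_neg h, hsum]

variable [MeasurableSpace Ω]

lemma stateMatrix_measBdd (hLmeas : ∀ η, Measurable (L η))
    (hL01 : ∀ η ω, L η ω = 0 ∨ L η ω = 1) (Wt : ι → ℝ) (i j : Fin N) :
    MeasBdd (fun ω => stateMatrix a b L Wt ω i j) := by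
  have hL : ∀ η, MeasBdd (L η) := fun η =>
    ⟨hLmeas η, 1, fun ω => by rcases hL01 η ω with h | h <;> simp [h]⟩
  have hterm : ∀ (P : ι → Prop) [DecidablePred P],
      MeasBdd (fun ω => ∑ η, if P η then Wt η * L η ω else 0) := by
    intro P _
    refine measBdd_sum _ _ fun η _ => ?_
    by_cases h : P η
    · simp only [if_pos h]
      exact (measBdd_const (Wt η)).mul (hL η)
    · simpa [if_neg h] using measBdd_const (0 : ℝ)
  by_cases h : i = j
  · simp only [stateMatrix, Matrix.of_apply, if_pos h]
    exact (hterm _).const_sub 1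
  · simp only [stateMatrix, Matrix.of_apply, if_neg h]
    exact hterm _

end StateMatrix

section Quad

variable {N : ℕ}

lemma dot_sq_eq (S : Matrix (Fin N) (Fin N) ℝ) (hS : Sᵀ = S) (x : Fin N → ℝ) :
    x ⬝ᵥ (S * S) *ᵥ x = ∑ i, ((S *ᵥ x) i) ^ 2 := by
  rw [← Matrix.mulVec_mulVec, Matrix.dotProduct_mulVec, ← Matrix.mulVec_transpose, hS]
  simp [dotProduct, sq]

lemma dot_dot_expand (A : Matrix (Fin N) (Fin N) ℝ) (x : Fin N → ℝ) :
    x ⬝ᵥ A *ᵥ x = ∑ i, ∑ j, x i * A i j * x j := by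
  simp [dotProduct, Matrix.mulVec, Finset.mul_sum, mul_assoc]

variable {Ω : Type*} [MeasurableSpace Ω] (μ : Measure Ω)

lemma dot_integral_eq (M : Ω → Matrix (Fin N) (Fin N) ℝ)
    (hint : ∀ i j, Integrable (fun ω => M ω i j) μ) (x : Fin N → ℝ) :
    x ⬝ᵥ (Matrix.of fun i j => ∫ ω, M ω i j ∂μ) *ᵥ x
      = ∫ ω, x ⬝ᵥ (M ω) *ᵥ x ∂μ := by
  rw [dot_dot_expand]
  have h1 : ∀ i j, x i * (Matrix.of fun i j => ∫ ω, M ω i j ∂μ) i j * x j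
      = ∫ ω, x i * M ω i j * x j ∂μ := by
    intro i j
    rw [Matrix.of_apply, mul_assoc, ← integral_mul_const, ← integral_const_mul]
    simp [mul_assoc]
  calc ∑ i, ∑ j, x i * (Matrix.of fun i j => ∫ ω, M ω i j ∂μ) i j * x j
      = ∑ i, ∑ j, ∫ ω, x i * M ω i j * x j ∂μ := by
        exact Finset.sum_congr rfl fun i _ => Finset.sum_congr rfl fun j _ => h1 i j
    _ = ∫ ω, ∑ i, ∑ j, x i * M ω i j * x j ∂μ := by
        have hintij : ∀ i j : Fin N, Integrable (fun ω => x i * M ω i j * x j) μ :=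
          fun i j => (((hint i j).const_mul (x i)).mul_const (x j)).congr
            (Filter.Eventually.of_forall fun ω => by ring)
        refine Eq.trans (Finset.sum_congr rfl fun i _ =>
          (integral_finset_sum _ fun j _ => hintij i j).symm) ?_
        exact (integral_finset_sum _ fun i _ =>
          integrable_finset_sum _ fun j _ => hintij i j).symm
    _ = ∫ ω, x ⬝ᵥ (M ω) *ᵥ x ∂μ :=
        integral_congr_ae (Filter.Eventually.of_forall fun ω => (dot_dot_expand (M ω) x).symm)

end Quad

/-- The map from the weight vector `{W_ij : {i,j} ∈ E}` to `λ_1(E[𝒲²] - J)` is convex. -/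
theorem lam1_expected_sq_convex (N : ℕ) (hN : 0 < N) {ι : Type*} [Fintype ι]
    {Ω : Type*} [MeasurableSpace Ω] (μ : MeasureTheory.Measure Ω)
    [IsProbabilityMeasure μ]
    (a b : ι → Fin N) (hab : ∀ η, a η ≠ b η)
    (L : ι → Ω → ℝ) (hLmeas : ∀ η, Measurable (L η))
    (hL01 : ∀ η ω, L η ω = 0 ∨ L η ω = 1)
    (J : Matrix (Fin N) (Fin N) ℝ) (hJ : J = Matrix.of fun _ _ => (1 : ℝ) / N) :
    ConvexOn ℝ Set.univ (fun Wt : ι → ℝ =>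
      sumNLargest 1 ((Matrix.of fun i j =>
        ∫ ω, (stateMatrix a b L Wt ω * stateMatrix a b L Wt ω) i j ∂μ) - J)) := by
  classical
  -- abbreviations
  set S : (ι → ℝ) → Ω → Matrix (Fin N) (Fin N) ℝ := fun W ω => stateMatrix a b L W ω with hSdef
  -- entries of S² are integrable
  have hSMB : ∀ (W : ι → ℝ) i j, MeasBdd (fun ω => S W ω i j) := fun W i j =>
    stateMatrix_measBdd a b L hLmeas hL01 W i j
  have hsqMB : ∀ (W : ι → ℝ) i j, MeasBdd (fun ω => (S W ω * S W ω) i j) := by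
    intro W i j
    have : (fun ω => (S W ω * S W ω) i j) = fun ω => ∑ k, S W ω i k * S W ω k j := by
      funext ω; rw [Matrix.mul_apply]
    rw [this]
    exact measBdd_sum _ _ fun k _ => (hSMB W i k).mul (hSMB W k j)
  have hint : ∀ (W : ι → ℝ) i j, Integrable (fun ω => (S W ω * S W ω) i j) μ :=
    fun W i j => (hsqMB W i j).integrable μ
  -- the matrices are Hermitian
  have hH : ∀ W : ι → ℝ, ((Matrix.of fun i j =>
      ∫ ω, (S W ω * S W ω) i j ∂μ) - J).IsHermitian := by
    intro W
    have hsq : ∀ (ω : Ω) i j, (S W ω * S W ω) i j = (S W ω * S W ω) j i := by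
      intro ω i j
      have h1 : (S W ω * S W ω)ᵀ = S W ω * S W ω := by
        rw [Matrix.transpose_mul, stateMatrix_transpose]
      conv_rhs => rw [← h1, Matrix.transpose_apply]
    have : ((Matrix.of fun i j => ∫ ω, (S W ω * S W ω) i j ∂μ) - J)ᴴ
        = (Matrix.of fun i j => ∫ ω, (S W ω * S W ω) i j ∂μ) - J := by
      ext i j
      simp only [Matrix.conjTranspose_apply, Matrix.sub_apply, Matrix.of_apply, star_trivial,
        hJ]
      congr 1
      exact integral_congr_ae (Filter.Eventually.of_forall fun ω => hsq ω j i)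
    exact this
  -- quadratic form identity
  have key : ∀ (W : ι → ℝ) (x : Fin N → ℝ),
      x ⬝ᵥ ((Matrix.of fun i j => ∫ ω, (S W ω * S W ω) i j ∂μ) - J) *ᵥ x
        = (∫ ω, ∑ i, ((S W ω *ᵥ x) i) ^ 2 ∂μ) - x ⬝ᵥ J *ᵥ x := by
    intro W x
    rw [Matrix.sub_mulVec, dotProduct_sub]
    congr 1
    rw [dot_integral_eq μ _ (hint W) x]
    refine integral_congr_ae (Filter.Eventually.of_forall fun ω => ?_)
    exact dot_sq_eq (S W ω) (stateMatrix_transpose a b L W ω) x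
  -- integrability of the quadratic forms
  have hqMB : ∀ (W : ι → ℝ) (x : Fin N → ℝ),
      MeasBdd (fun ω => ∑ i, ((S W ω *ᵥ x) i) ^ 2) := by
    intro W x
    refine measBdd_sum _ _ fun i _ => ?_
    have hv : MeasBdd (fun ω => (S W ω *ᵥ x) i) := by
      have : (fun ω => (S W ω *ᵥ x) i) = fun ω => ∑ j, S W ω i j * x j := by
        funext ω; rfl
      rw [this]
      exact measBdd_sum _ _ fun j _ => (hSMB W i j).mul (measBdd_const (x j))
    have := hv.mul hv
    simpa [sq] using this
  -- convexity
  refine ⟨convex_univ, fun W1 _ W2 _ t s ht hs hts => ?_⟩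
  simp only [smul_eq_mul]
  set Wm := t • W1 + s • W2 with hWm
  rw [sumNLargest_one hN (hH Wm), sumNLargest_one hN (hH W1), sumNLargest_one hN (hH W2)]
  obtain ⟨x, hx1, hx2⟩ := rayleigh_attained (hH Wm) hN
  rw [← hx2, key Wm x]
  have b1 : (∫ ω, ∑ i, ((S W1 ω *ᵥ x) i) ^ 2 ∂μ) - x ⬝ᵥ J *ᵥ x
      ≤ Finset.univ.sup' (Finset.univ_nonempty_iff.2 ⟨⟨0, hN⟩⟩) (hH W1).eigenvalues := by
    rw [← key W1 x]
    exact rayleigh_le (hH W1) hN (WithLp.toLp 2 x) hx1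
  have b2 : (∫ ω, ∑ i, ((S W2 ω *ᵥ x) i) ^ 2 ∂μ) - x ⬝ᵥ J *ᵥ x
      ≤ Finset.univ.sup' (Finset.univ_nonempty_iff.2 ⟨⟨0, hN⟩⟩) (hH W2).eigenvalues := by
    rw [← key W2 x]
    exact rayleigh_le (hH W2) hN (WithLp.toLp 2 x) hx1
  -- pointwise convexity of the quadratic form
  have hpt : ∀ ω, ∑ i, ((S Wm ω *ᵥ x) i) ^ 2
      ≤ t * (∑ i, ((S W1 ω *ᵥ x) i) ^ 2) + s * (∑ i, ((S W2 ω *ᵥ x) i) ^ 2) := by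
    intro ω
    have haff : S Wm ω = t • S W1 ω + s • S W2 ω := stateMatrix_affine a b L W1 W2 ω t s hts
    rw [Finset.mul_sum, Finset.mul_sum, ← Finset.sum_add_distrib]
    refine Finset.sum_le_sum fun i _ => ?_
    have hv : (S Wm ω *ᵥ x) i = t * (S W1 ω *ᵥ x) i + s * (S W2 ω *ᵥ x) i := by
      rw [haff, Matrix.add_mulVec, Matrix.smul_mulVec, Matrix.smul_mulVec]
      simp [smul_eq_mul]
    rw [hv]
    nlinarith [sq_nonneg ((S W1 ω *ᵥ x) i - (S W2 ω *ᵥ x) i), mul_nonneg ht hs,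
      sq_nonneg ((S W1 ω *ᵥ x) i), sq_nonneg ((S W2 ω *ᵥ x) i)]
  have hmono : (∫ ω, ∑ i, ((S Wm ω *ᵥ x) i) ^ 2 ∂μ)
      ≤ t * (∫ ω, ∑ i, ((S W1 ω *ᵥ x) i) ^ 2 ∂μ) + s * (∫ ω, ∑ i, ((S W2 ω *ᵥ x) i) ^ 2 ∂μ) := by
    rw [← integral_const_mul, ← integral_const_mul, ← integral_add
      (((hqMB W1 x).integrable μ).const_mul t) (((hqMB W2 x).integrable μ).const_mul s)]
    exact integral_mono ((hqMB Wm x).integrable μ)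
      ((((hqMB W1 x).integrable μ).const_mul t).add (((hqMB W2 x).integrable μ).const_mul s))
      hpt
  calc (∫ ω, ∑ i, ((S Wm ω *ᵥ x) i) ^ 2 ∂μ) - x ⬝ᵥ J *ᵥ x
      ≤ (t * (∫ ω, ∑ i, ((S W1 ω *ᵥ x) i) ^ 2 ∂μ)
          + s * (∫ ω, ∑ i, ((S W2 ω *ᵥ x) i) ^ 2 ∂μ)) - (t + s) * (x ⬝ᵥ J *ᵥ x) := by
        rw [hts, one_mul]
        linarith
    _ = t * ((∫ ω, ∑ i, ((S W1 ω *ᵥ x) i) ^ 2 ∂μ) - x ⬝ᵥ J *ᵥ x)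
          + s * ((∫ ω, ∑ i, ((S W2 ω *ᵥ x) i) ^ 2 ∂μ) - x ⬝ᵥ J *ᵥ x) := by ring
    _ ≤ _ := add_le_add (mul_le_mul_of_nonneg_left b1 ht) (mul_le_mul_of_nonneg_left b2 hs)
end
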